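/- For each $\mathbf{n} \in \mathbf{D}$, the $X$-valued function $f(\mathbf{n}) = \sum_{k=0}^{\infty} \sum_{\sigma \in \{0,1\}^k} \frac{1}{(k+1)2^{k/2}} \frac{1}{\lambda(A(\sigma,\mathbf{n}(k)))} e(\sigma,\mathbf{n}(k)) \chi_{A(\sigma,\mathbf{n}(k))}$ is Pettis integrable, and for every $\tau \in \{0,1\}^{n_k}$: $\frac{1}{2K} 2^{-n_k/2} u_k \le \|\int_{I_\tau} f(\mathbf{n})_{|\tau}\| \le \frac{3}{2} 2^{-n_k/2} u_k$, where $u_k = \sqrt{\sum_{i=n_k}^{n_{k+1}-1} \frac{1}{(i+1)^2}}$. -/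

import Mathlib

open MeasureTheory
open scoped Classical
open scoped ENNReal NNReal

noncomputable section

/-- The index set `B = {(σ,i) : σ ∈ {0,1}^{<∞}, 0 ≤ i ≤ |σ|}`. -/
def Bidx : Type := Σ σ : List Bool, Fin (σ.length + 1)

/-- Left endpoint of the dyadic interval `I_σ`. -/
noncomputable def dyadicLeft (σ : List Bool) : ℝ :=
  ∑ i ∈ Finset.range σ.length, if σ.getD i false then (2:ℝ)⁻¹ ^ (i+1) else 0

/-- The dyadic interval `I_σ ⊆ [0,1]` of length `2^{-|σ|}`: `I_∅ = [0,1]`,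
`I_{σ0}` is the left half and `I_{σ1}` the right half of `I_σ`. -/
noncomputable def dyadicInterval (σ : List Bool) : Set ℝ :=
  Set.Icc (dyadicLeft σ) (dyadicLeft σ + (2:ℝ)⁻¹ ^ σ.length)

/-- `f` is Pettis integrable with respect to `μ`: every continuous functional composed with
`f` is integrable, and over each measurable set there is a vector representing the integrals. -/
def PettisIntegrable {X : Type} [NormedAddCommGroup X] [NormedSpace ℝ X]
    (f : ℝ → X) (μ : MeasureTheory.Measure ℝ) : Prop :=
  (∀ φ : X →L[ℝ] ℝ, MeasureTheory.Integrable (fun t => φ (f t)) μ) ∧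
  ∀ E : Set ℝ, MeasurableSet E → ∃ v : X, ∀ φ : X →L[ℝ] ℝ, φ v = ∫ t in E, φ (f t) ∂μ

/-- `v` is the Pettis integral of `f` over the set `E` (w.r.t. `μ`). -/
def IsPettisIntegralOn {X : Type} [NormedAddCommGroup X] [NormedSpace ℝ X]
    (f : ℝ → X) (μ : MeasureTheory.Measure ℝ) (E : Set ℝ) (v : X) : Prop :=
  ∀ φ : X →L[ℝ] ℝ, φ v = ∫ t in E, φ (f t) ∂μ

/-- The basic function `f = ∑_{(σ,i) ∈ B} c(σ,i) (1/λ(A(σ,i))) e(σ,i) χ_{A(σ,i)}`. -/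
noncomputable def basicFun {X : Type} [NormedAddCommGroup X] [NormedSpace ℝ X]
    (c : Bidx → ℝ) (A : Bidx → Set ℝ) (e : Bidx → X) : ℝ → X :=
  fun t => ∑' p : Bidx,
    Set.indicator (A p) (fun _ => ((MeasureTheory.volume (A p)).toReal)⁻¹ • (c p • e p)) t

/-- The restriction `f_{|τ}`: the subseries of the basic function over indices `(σ,i)`
with `σ` an extension of `τ`. -/
noncomputable def basicFunRes {X : Type} [NormedAddCommGroup X] [NormedSpace ℝ X]
    (τ : List Bool) (c : Bidx → ℝ) (A : Bidx → Set ℝ) (e : Bidx → X) : ℝ → X :=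
  basicFun (fun p => if τ <+: p.1 then c p else 0) A e

/-- Coefficients of the special basic function `f(𝐧)`: the coefficient of `(σ, i)` is
`1/((k+1)2^{k/2})` when `|σ| = k` and `i = 𝐧(k)`, and `0` otherwise. -/
noncomputable def specialCoef (n : ℕ → ℕ) : Bidx → ℝ := fun p =>
  if (p.2 : ℕ) = n p.1.length then
    (((p.1.length : ℝ) + 1) * (2:ℝ) ^ ((p.1.length : ℝ) / 2))⁻¹
  else 0

-- instances
instance : Encodable Bidx := inferInstanceAs (Encodable (Σ σ : List Bool, Fin (σ.length + 1)))

instance : Infinite Bidx :=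
  Infinite.of_injective (fun k => (⟨List.replicate k true, ⟨0, Nat.succ_pos _⟩⟩ : Bidx))
    (by
      intro a b h
      have := congrArg (fun p : Bidx => p.1.length) h
      simpa using this)

instance : Denumerable Bidx := Denumerable.ofEncodableOfInfinite Bidx

noncomputable def bidxEnum : ℕ ≃ Bidx := (Denumerable.eqv Bidx).symm

-- geometry
lemma sumHalf (k : ℕ) : ∑ i ∈ Finset.range k, (2:ℝ)⁻¹ ^ (i+1) = 1 - (2:ℝ)⁻¹ ^ k := by
  induction k with
  | zero => simp
  | succ k ih => rw [Finset.sum_range_succ, ih]; ring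

lemma dyadicLeft_nonneg (σ : List Bool) : 0 ≤ dyadicLeft σ := by
  refine Finset.sum_nonneg fun i _ => ?_
  split <;> positivity

lemma dyadicLeft_le (σ : List Bool) : dyadicLeft σ ≤ 1 - (2:ℝ)⁻¹ ^ σ.length := by
  rw [← sumHalf]
  refine Finset.sum_le_sum fun i _ => ?_
  split
  · exact le_refl _
  · positivity

lemma dyadicInterval_subset_Icc (σ : List Bool) : dyadicInterval σ ⊆ Set.Icc (0:ℝ) 1 := by
  refine Set.Icc_subset_Icc (dyadicLeft_nonneg σ) ?_
  have := dyadicLeft_le σ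
  linarith

lemma dyadicLeft_append (τ t : List Bool) :
    dyadicLeft (τ ++ t) =
      dyadicLeft τ + ∑ j ∈ Finset.range t.length, if t.getD j false then (2:ℝ)⁻¹ ^ (τ.length + j + 1) else 0 := by
  unfold dyadicLeft
  rw [List.length_append, Finset.sum_range_add]
  congr 1
  · refine Finset.sum_congr rfl fun i hi => ?_
    rw [List.getD_append _ _ _ _ (Finset.mem_range.mp hi)]
  · refine Finset.sum_congr rfl fun j _ => ?_
    rw [List.getD_append_right _ _ _ _ (Nat.le_add_right _ _), Nat.add_sub_cancel_left]

lemma dyadicInterval_mono {τ σ : List Bool} (h : τ <+: σ) :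
    dyadicInterval σ ⊆ dyadicInterval τ := by
  obtain ⟨t, rfl⟩ := h
  have hR0 : 0 ≤ ∑ j ∈ Finset.range t.length, if t.getD j false then (2:ℝ)⁻¹ ^ (τ.length + j + 1) else 0 := by
    refine Finset.sum_nonneg fun i _ => ?_
    split <;> positivity
  have hRle : (∑ j ∈ Finset.range t.length, if t.getD j false then (2:ℝ)⁻¹ ^ (τ.length + j + 1) else 0)
      ≤ (2:ℝ)⁻¹ ^ τ.length - (2:ℝ)⁻¹ ^ (τ.length + t.length) := by
    have h1 : (∑ j ∈ Finset.range t.length, if t.getD j false then (2:ℝ)⁻¹ ^ (τ.length + j + 1) else 0)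
        ≤ ∑ j ∈ Finset.range t.length, (2:ℝ)⁻¹ ^ τ.length * (2:ℝ)⁻¹ ^ (j + 1) := by
      refine Finset.sum_le_sum fun i _ => ?_
      rw [← pow_add]
      split
      · apply le_of_eq; ring_nf
      · positivity
    rw [← Finset.mul_sum, sumHalf] at h1
    calc _ ≤ (2:ℝ)⁻¹ ^ τ.length * (1 - (2:ℝ)⁻¹ ^ t.length) := h1
      _ = (2:ℝ)⁻¹ ^ τ.length - (2:ℝ)⁻¹ ^ (τ.length + t.length) := by rw [pow_add]; ring
  unfold dyadicInterval
  rw [dyadicLeft_append, List.length_append]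
  refine Set.Icc_subset_Icc (by linarith) (by linarith)


/-- the coefficient magnitude at level k -/
noncomputable def cf (k : ℕ) : ℝ := (((k : ℝ) + 1) * (2:ℝ) ^ ((k : ℝ) / 2))⁻¹

lemma cf_nonneg (k : ℕ) : 0 ≤ cf k := by
  unfold cf
  have h2 : (0:ℝ) < (2:ℝ) ^ ((k : ℝ) / 2) := Real.rpow_pos_of_pos (by norm_num) _
  positivity

lemma cf_sq (k : ℕ) : cf k ^ 2 = (((k:ℝ)+1)^2 * (2:ℝ)^(k:ℕ))⁻¹ := by
  unfold cf
  have h : ((2:ℝ) ^ ((k : ℝ) / 2)) ^ 2 = (2:ℝ) ^ (k : ℕ) := by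
    rw [← Real.rpow_natCast ((2:ℝ) ^ ((k : ℝ) / 2)) 2, ← Real.rpow_mul (by norm_num)]
    norm_num
  rw [← h, ← mul_pow, inv_pow]

lemma exists_ofFn {α : Type*} {m : ℕ} (t : List α) (h : t.length = m) :
    ∃ ρ : Fin m → α, List.ofFn ρ = t := by
  subst h; exact ⟨t.get, List.ofFn_get t⟩

/-- the finset of indices `(σ, nn k)` with `σ` of length `k` extending `τ` -/
noncomputable def lvlSet (nn : ℕ → ℕ) (hnn : ∀ i, nn i ≤ i) (τ : List Bool) (k : ℕ) :
    Finset Bidx :=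
  if h : τ.length ≤ k then
    Finset.univ.image (fun ρ : Fin (k - τ.length) → Bool =>
      (⟨τ ++ List.ofFn ρ, ⟨nn k, by
        have hl : (τ ++ List.ofFn ρ).length = k := by
          simp [Nat.add_sub_cancel' h]
        rw [hl]; exact Nat.lt_succ_of_le (hnn k)⟩⟩ : Bidx))
  else ∅

lemma mem_lvlSet {nn : ℕ → ℕ} {hnn : ∀ i, nn i ≤ i} {τ : List Bool} {k : ℕ} {p : Bidx} :
    p ∈ lvlSet nn hnn τ k ↔ τ <+: p.1 ∧ p.1.length = k ∧ (p.2 : ℕ) = nn k := by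
  constructor
  · intro hp
    unfold lvlSet at hp
    split at hp
    · obtain ⟨ρ, -, rfl⟩ := Finset.mem_image.mp hp
      refine ⟨List.prefix_append _ _, by simp [Nat.add_sub_cancel' ‹τ.length ≤ k›], rfl⟩
    · simp at hp
  · obtain ⟨σ, i⟩ := p
    rintro ⟨⟨t, ht⟩, hlen, hval⟩
    simp only at ht hlen hval
    subst ht
    rw [List.length_append] at hlen
    have hL : τ.length ≤ k := by omega
    have htlen : t.length = k - τ.length := by omega
    unfold lvlSet
    rw [dif_pos hL]
    obtain ⟨ρ, hρ⟩ := exists_ofFn t htlen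
    subst hρ
    refine Finset.mem_image.mpr ⟨ρ, Finset.mem_univ _, ?_⟩
    exact congrArg (Sigma.mk (τ ++ List.ofFn ρ)) (Fin.ext hval.symm)

lemma lvlSet_card_smul {nn : ℕ → ℕ} {hnn : ∀ i, nn i ≤ i} {τ : List Bool} {k : ℕ}
    (hL : τ.length ≤ k) (F : Bidx → ℝ) (a : ℝ) (hF : ∀ p ∈ lvlSet nn hnn τ k, F p = a) :
    ∑ p ∈ lvlSet nn hnn τ k, F p = 2 ^ (k - τ.length) * a := by
  rw [Finset.sum_congr rfl hF, Finset.sum_const, nsmul_eq_mul]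
  congr 1
  unfold lvlSet
  rw [dif_pos hL]
  refine (congrArg (Nat.cast : ℕ → ℝ) (Finset.card_image_of_injective _ ?hinj)).trans ?_
  swap
  · simp
  case hinj =>
    intro ρ ρ' h
    have h1 : τ ++ List.ofFn ρ = τ ++ List.ofFn ρ' := congrArg Sigma.fst h
    exact List.ofFn_injective (List.append_cancel_left h1)


noncomputable def blkSet (n : ℕ → ℕ) (nn : ℕ → ℕ) (hnn : ∀ i, nn i ≤ i) (τ : List Bool)
    (j : ℕ) : Finset Bidx :=
  (Finset.Ico (n j) (n (j+1))).biUnion (lvlSet nn hnn τ)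

lemma mem_blkSet {n nn : ℕ → ℕ} {hnn : ∀ i, nn i ≤ i} {τ : List Bool} {j : ℕ} {p : Bidx} :
    p ∈ blkSet n nn hnn τ j ↔
      p ∈ lvlSet nn hnn τ p.1.length ∧ n j ≤ p.1.length ∧ p.1.length < n (j+1) := by
  unfold blkSet
  rw [Finset.mem_biUnion]
  constructor
  · rintro ⟨k, hk, hp⟩
    have hlen := (mem_lvlSet.mp hp).2.1
    subst hlen
    exact ⟨hp, Finset.mem_Ico.mp hk⟩
  · rintro ⟨hp, h1, h2⟩
    exact ⟨p.1.length, Finset.mem_Ico.mpr ⟨h1, h2⟩, hp⟩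

lemma blkSet_levels {n nn : ℕ → ℕ} {hnn : ∀ i, nn i ≤ i} {τ : List Bool} {j : ℕ} :
    ∀ p ∈ blkSet n nn hnn τ j, n j ≤ p.1.length ∧ p.1.length < n (j+1) :=
  fun _ hp => (mem_blkSet.mp hp).2

lemma blkSet_disjoint {n nn : ℕ → ℕ} {hnn : ∀ i, nn i ≤ i} {τ : List Bool}
    (hmono : StrictMono n) {i j : ℕ} (hij : i ≠ j) :
    Disjoint (blkSet n nn hnn τ i) (blkSet n nn hnn τ j) := by
  rw [Finset.disjoint_left]
  intro p hpi hpj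
  obtain ⟨-, h1, h2⟩ := mem_blkSet.mp hpi
  obtain ⟨-, h3, h4⟩ := mem_blkSet.mp hpj
  rcases lt_or_gt_of_ne hij with h | h
  · exact absurd (le_trans (hmono.monotone (Nat.succ_le_of_lt h)) h3) (not_le.mpr h2)
  · exact absurd (le_trans (hmono.monotone (Nat.succ_le_of_lt h)) h1) (not_le.mpr h4)

/-- L3: exact sum of `cf²` over a block. -/
lemma blkSet_sum_cf_sq {n nn : ℕ → ℕ} {hnn : ∀ i, nn i ≤ i} {τ : List Bool} {j : ℕ}
    (hτj : τ.length ≤ n j) :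
    ∑ p ∈ blkSet n nn hnn τ j, cf p.1.length ^ 2 =
      ((2:ℝ) ^ τ.length)⁻¹ * ∑ i ∈ Finset.Ico (n j) (n (j+1)), (((i:ℝ) + 1)⁻¹) ^ 2 := by
  unfold blkSet
  rw [Finset.sum_biUnion]
  · rw [Finset.mul_sum]
    refine Finset.sum_congr rfl fun k hk => ?_
    have hLk : τ.length ≤ k := le_trans hτj (Finset.mem_Ico.mp hk).1
    rw [lvlSet_card_smul hLk _ (cf k ^ 2) (fun p hp => by rw [(mem_lvlSet.mp hp).2.1])]
    rw [cf_sq, pow_sub₀ (2:ℝ) two_ne_zero hLk]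
    have hk1 : ((k:ℝ) + 1) ≠ 0 := by positivity
    have h2k : ((2:ℝ) ^ k) ≠ 0 := by positivity
    have h2L : ((2:ℝ) ^ τ.length) ≠ 0 := by positivity
    field_simp
  · intro a ha b hb hab
    refine Finset.disjoint_left.mpr fun p hpa hpb => ?_
    exact hab (((mem_lvlSet.mp hpa).2.1).symm.trans ((mem_lvlSet.mp hpb).2.1))

/-- the sequence u_j -/
noncomputable def useq (n : ℕ → ℕ) (j : ℕ) : ℝ :=
  Real.sqrt (∑ i ∈ Finset.Ico (n j) (n (j+1)), (((i:ℝ) + 1)⁻¹) ^ 2)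

lemma useq_nonneg (n : ℕ → ℕ) (j : ℕ) : 0 ≤ useq n j := Real.sqrt_nonneg _

lemma useq_pow_le {n : ℕ → ℕ} (hu : ∀ k, useq n (k+1) < useq n k / 3) (k : ℕ) :
    ∀ i : ℕ, useq n (k + i) ≤ (1/3 : ℝ) ^ i * useq n k := by
  intro i
  induction i with
  | zero => simp
  | succ i ih =>
      have h1 : useq n (k + i + 1) < useq n (k + i) / 3 := hu (k + i)
      have h2 : (0:ℝ) < (1/3:ℝ) ^ i := by positivity
      calc useq n (k + (i+1)) = useq n (k + i + 1) := by ring_nf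
        _ ≤ useq n (k + i) / 3 := le_of_lt h1
        _ ≤ ((1/3:ℝ) ^ i * useq n k) / 3 := by linarith
        _ = (1/3:ℝ) ^ (i+1) * useq n k := by ring

lemma useq_tail_sum {n : ℕ → ℕ} (hu : ∀ k, useq n (k+1) < useq n k / 3) (k m : ℕ) :
    ∑ j ∈ Finset.Ico k m, useq n j ≤ (3/2) * useq n k := by
  rcases le_or_gt k m with h | h
  · rw [Finset.sum_Ico_eq_sum_range]
    have hgeom : ∑ i ∈ Finset.range (m - k), (1/3:ℝ) ^ i ≤ 3/2 := by
      rw [geom_sum_eq (by norm_num)]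
      have hp : (0:ℝ) ≤ (1/3:ℝ) ^ (m - k) := by positivity
      rw [div_le_iff_of_neg (by norm_num)]
      linarith
    calc ∑ i ∈ Finset.range (m - k), useq n (k + i)
        ≤ ∑ i ∈ Finset.range (m - k), (1/3:ℝ) ^ i * useq n k :=
          Finset.sum_le_sum fun i _ => useq_pow_le hu k i
      _ = (∑ i ∈ Finset.range (m - k), (1/3:ℝ) ^ i) * useq n k := by rw [Finset.sum_mul]
      _ ≤ (3/2) * useq n k := by
          have := useq_nonneg n k
          nlinarith
  · rw [Finset.Ico_eq_empty (by omega)]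
    simp only [Finset.sum_empty]
    have := useq_nonneg n k
    linarith


lemma exists_block {n : ℕ → ℕ} (hmono : StrictMono n) {a b x : ℕ} (ha : n a ≤ x)
    (hb : x < n b) : ∃ j, a ≤ j ∧ j < b ∧ n j ≤ x ∧ x < n (j+1) := by
  classical
  set P : ℕ → Prop := fun j => n j ≤ x with hP
  have hab : a ≤ b := le_of_lt (hmono.lt_iff_lt.mp (lt_of_le_of_lt ha hb))
  have hJle : Nat.findGreatest P b ≤ b := Nat.findGreatest_le b
  have hJP : P (Nat.findGreatest P b) := Nat.findGreatest_spec hab ha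
  have hJb : Nat.findGreatest P b < b := by
    rcases lt_or_eq_of_le hJle with h | h
    · exact h
    · exfalso; rw [h] at hJP; exact absurd hJP (not_le.mpr hb)
  refine ⟨Nat.findGreatest P b, Nat.le_findGreatest hab ha, hJb, hJP, ?_⟩
  have := Nat.findGreatest_is_greatest (Nat.lt_succ_self _) (Nat.succ_le_of_lt hJb)
  exact not_le.mp this

section Analytic

variable {X : Type} [NormedAddCommGroup X] [NormedSpace ℝ X]

/-- ℓ² bound on the functionals of block vectors -/
lemma l2_dual {n : ℕ → ℕ} (e : Bidx → X)
    (hblock : ∀ (j : ℕ) (s : Finset Bidx),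
      (∀ p ∈ s, n j ≤ p.1.length ∧ p.1.length < n (j+1)) →
      ∀ lam : Bidx → ℝ,
        ‖∑ p ∈ s, lam p • e p‖ ≤ Real.sqrt (∑ p ∈ s, lam p ^ 2) ∧
        (1/2) * Real.sqrt (∑ p ∈ s, lam p ^ 2) ≤ ‖∑ p ∈ s, lam p • e p‖)
    (j : ℕ) (s : Finset Bidx)
    (hs : ∀ p ∈ s, n j ≤ p.1.length ∧ p.1.length < n (j+1)) (φ : X →L[ℝ] ℝ) :
    ∑ p ∈ s, (φ (e p)) ^ 2 ≤ ‖φ‖ ^ 2 := by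
  set S := ∑ p ∈ s, (φ (e p)) ^ 2 with hSdef
  have hS0 : 0 ≤ S := Finset.sum_nonneg fun p _ => sq_nonneg _
  have hup := (hblock j s hs (fun p => φ (e p))).1
  have hφS : φ (∑ p ∈ s, φ (e p) • e p) = S := by
    rw [map_sum]
    refine Finset.sum_congr rfl fun p _ => ?_
    rw [_root_.map_smul, smul_eq_mul, sq]
  have h1 : S ≤ ‖φ‖ * Real.sqrt S := by
    calc S = φ (∑ p ∈ s, φ (e p) • e p) := hφS.symm
      _ ≤ |φ (∑ p ∈ s, φ (e p) • e p)| := le_abs_self _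
      _ ≤ ‖φ‖ * ‖∑ p ∈ s, φ (e p) • e p‖ := by
          rw [← Real.norm_eq_abs]; exact φ.le_opNorm _
      _ ≤ ‖φ‖ * Real.sqrt S := by
          exact mul_le_mul_of_nonneg_left hup (norm_nonneg φ)
  rcases eq_or_lt_of_le hS0 with h | h
  · rw [← h]; positivity
  · have hsq : Real.sqrt S ≤ ‖φ‖ := by
      have hS' : Real.sqrt S * Real.sqrt S ≤ ‖φ‖ * Real.sqrt S := by
        rw [Real.mul_self_sqrt hS0]; exact h1
      exact le_of_mul_le_mul_right hS' (Real.sqrt_pos.mpr h)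
    calc S = Real.sqrt S ^ 2 := (Real.sq_sqrt hS0).symm
      _ ≤ ‖φ‖ ^ 2 := by
          exact pow_le_pow_left₀ (Real.sqrt_nonneg _) hsq 2

lemma cs_bound (s : Finset Bidx) (f g : Bidx → ℝ) :
    ∑ p ∈ s, |f p| * |g p| ≤
      Real.sqrt (∑ p ∈ s, f p ^ 2) * Real.sqrt (∑ p ∈ s, g p ^ 2) := by
  have hcs := Finset.sum_mul_sq_le_sq_mul_sq s (fun p => |f p|) (fun p => |g p|)
  simp only [sq_abs] at hcs
  have ha : 0 ≤ ∑ p ∈ s, |f p| * |g p| :=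
    Finset.sum_nonneg fun p _ => mul_nonneg (abs_nonneg _) (abs_nonneg _)
  have h1 : 0 ≤ ∑ p ∈ s, f p ^ 2 := Finset.sum_nonneg fun p _ => sq_nonneg _
  calc ∑ p ∈ s, |f p| * |g p| = Real.sqrt ((∑ p ∈ s, |f p| * |g p|) ^ 2) :=
        (Real.sqrt_sq ha).symm
    _ ≤ Real.sqrt ((∑ p ∈ s, f p ^ 2) * ∑ p ∈ s, g p ^ 2) := Real.sqrt_le_sqrt hcs
    _ = _ := Real.sqrt_mul h1 _

end Analytic


lemma partition_blocks {n : ℕ → ℕ} (hmono : StrictMono n) (s' : Finset Bidx) (M : ℕ)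
    (hlev : ∀ p ∈ s', n M ≤ p.1.length) :
    ∃ M', s' = (Finset.Ico M M').biUnion
        (fun j => s'.filter (fun p => n j ≤ p.1.length ∧ p.1.length < n (j+1))) := by
  classical
  refine ⟨(s'.sup fun p => p.1.length) + 1, ?_⟩
  ext p
  rw [Finset.mem_biUnion]
  constructor
  · intro hp
    have h1 : n M ≤ p.1.length := hlev p hp
    have h2 : p.1.length < n ((s'.sup fun q => q.1.length) + 1) := by
      have ha : p.1.length ≤ s'.sup (fun q => q.1.length) :=
        Finset.le_sup (f := fun q : Bidx => q.1.length) hp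
      have hb := hmono.le_apply (x := (s'.sup fun q => q.1.length) + 1)
      omega
    obtain ⟨j, hMj, hjM', hj1, hj2⟩ := exists_block hmono h1 h2
    exact ⟨j, Finset.mem_Ico.mpr ⟨hMj, hjM'⟩, Finset.mem_filter.mpr ⟨hp, hj1, hj2⟩⟩
  · rintro ⟨j, -, hp⟩
    exact (Finset.mem_filter.mp hp).1

section Analytic2

variable {X : Type} [NormedAddCommGroup X] [NormedSpace ℝ X]
variable {n : ℕ → ℕ} {e : Bidx → X}

lemma filters_pdisjoint (hmono : StrictMono n) (s' : Finset Bidx) (M M' : ℕ) :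
    Set.PairwiseDisjoint ↑(Finset.Ico M M')
      (fun j => s'.filter (fun p => n j ≤ p.1.length ∧ p.1.length < n (j+1))) := by
  intro i _ j _ hij
  refine Finset.disjoint_left.mpr fun p hpi hpj => ?_
  obtain ⟨-, h1, h2⟩ := Finset.mem_filter.mp hpi
  obtain ⟨-, h3, h4⟩ := Finset.mem_filter.mp hpj
  rcases lt_or_gt_of_ne hij with h | h
  · exact absurd (le_trans (hmono.monotone (Nat.succ_le_of_lt h)) h3) (not_le.mpr h2)
  · exact absurd (le_trans (hmono.monotone (Nat.succ_le_of_lt h)) h1) (not_le.mpr h4)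

lemma lam_sq_le_blk {nn : ℕ → ℕ} {hnn : ∀ i, nn i ≤ i} {τ : List Bool}
    (hmono : StrictMono n) (lam : Bidx → ℝ)
    (hsupp : ∀ p, lam p ≠ 0 → p ∈ lvlSet nn hnn τ p.1.length)
    (hbd : ∀ p, |lam p| ≤ cf p.1.length)
    (s'j : Finset Bidx) (j : ℕ)
    (hsub' : ∀ p ∈ s'j, lam p ≠ 0)
    (hlv : ∀ p ∈ s'j, n j ≤ p.1.length ∧ p.1.length < n (j+1))
    (hτj : τ.length ≤ n j) :
    ∑ p ∈ s'j, lam p ^ 2 ≤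
      ((2:ℝ) ^ τ.length)⁻¹ * ∑ i ∈ Finset.Ico (n j) (n (j+1)), (((i:ℝ) + 1)⁻¹) ^ 2 := by
  have hsub : s'j ⊆ blkSet n nn hnn τ j := fun p hp =>
    mem_blkSet.mpr ⟨hsupp p (hsub' p hp), hlv p hp⟩
  calc ∑ p ∈ s'j, lam p ^ 2 ≤ ∑ p ∈ s'j, cf p.1.length ^ 2 := by
        refine Finset.sum_le_sum fun p _ => ?_
        rw [← sq_abs]
        exact pow_le_pow_left₀ (abs_nonneg _) (hbd p) 2
    _ ≤ ∑ p ∈ blkSet n nn hnn τ j, cf p.1.length ^ 2 :=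
        Finset.sum_le_sum_of_subset_of_nonneg hsub (fun p _ _ => sq_nonneg _)
    _ = _ := blkSet_sum_cf_sq hτj

lemma block_bound (hmono : StrictMono n)
    (hblock : ∀ (j : ℕ) (s : Finset Bidx),
      (∀ p ∈ s, n j ≤ p.1.length ∧ p.1.length < n (j+1)) →
      ∀ lam : Bidx → ℝ,
        ‖∑ p ∈ s, lam p • e p‖ ≤ Real.sqrt (∑ p ∈ s, lam p ^ 2) ∧
        (1/2) * Real.sqrt (∑ p ∈ s, lam p ^ 2) ≤ ‖∑ p ∈ s, lam p • e p‖)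
    (hu : ∀ k, useq n (k+1) < useq n k / 3)
    {nn : ℕ → ℕ} {hnn : ∀ i, nn i ≤ i} {τ : List Bool}
    (lam : Bidx → ℝ)
    (hsupp : ∀ p, lam p ≠ 0 → p ∈ lvlSet nn hnn τ p.1.length)
    (hbd : ∀ p, |lam p| ≤ cf p.1.length)
    (M : ℕ) (hτM : τ.length ≤ n M)
    (s : Finset Bidx) (hlev : ∀ p ∈ s, lam p ≠ 0 → n M ≤ p.1.length) :
    ‖∑ p ∈ s, lam p • e p‖ ≤
      Real.sqrt (((2:ℝ) ^ τ.length)⁻¹) * ((3/2) * useq n M) := by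
  classical
  set s' := s.filter (fun p => lam p ≠ 0) with hs'
  have hsum : ∑ p ∈ s', lam p • e p = ∑ p ∈ s, lam p • e p :=
    Finset.sum_filter_of_ne (fun p _ h => fun h0 => h (by rw [h0, zero_smul]))
  obtain ⟨M', hpart⟩ := partition_blocks hmono s' M
    (fun p hp => hlev p (Finset.mem_filter.mp hp).1 (Finset.mem_filter.mp hp).2)
  rw [← hsum, hpart, Finset.sum_biUnion (filters_pdisjoint hmono s' M M')]
  have hjb : ∀ j ∈ Finset.Ico M M',
      ‖∑ p ∈ s'.filter (fun p => n j ≤ p.1.length ∧ p.1.length < n (j+1)), lam p • e p‖ ≤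
        Real.sqrt (((2:ℝ) ^ τ.length)⁻¹) * useq n j := by
    intro j hj
    have hcond : ∀ p ∈ s'.filter (fun p => n j ≤ p.1.length ∧ p.1.length < n (j+1)),
        n j ≤ p.1.length ∧ p.1.length < n (j+1) := fun p hp => (Finset.mem_filter.mp hp).2
    have hτj : τ.length ≤ n j := le_trans hτM (hmono.monotone (Finset.mem_Ico.mp hj).1)
    have h2 := lam_sq_le_blk (nn := nn) (hnn := hnn) hmono lam hsupp hbd
      (s'.filter (fun p => n j ≤ p.1.length ∧ p.1.length < n (j+1))) j
      (fun p hp => (Finset.mem_filter.mp (Finset.mem_filter.mp hp).1).2)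
      hcond hτj
    calc ‖∑ p ∈ s'.filter (fun p => n j ≤ p.1.length ∧ p.1.length < n (j+1)), lam p • e p‖
        ≤ Real.sqrt (∑ p ∈ s'.filter (fun p => n j ≤ p.1.length ∧ p.1.length < n (j+1)), lam p ^ 2) :=
          (hblock j _ hcond lam).1
      _ ≤ Real.sqrt (((2:ℝ) ^ τ.length)⁻¹ *
            ∑ i ∈ Finset.Ico (n j) (n (j+1)), (((i:ℝ) + 1)⁻¹) ^ 2) := Real.sqrt_le_sqrt h2
      _ = Real.sqrt (((2:ℝ) ^ τ.length)⁻¹) * useq n j := by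
          rw [Real.sqrt_mul (by positivity)]; rfl
  calc ‖∑ j ∈ Finset.Ico M M', ∑ p ∈ s'.filter (fun p => n j ≤ p.1.length ∧ p.1.length < n (j+1)), lam p • e p‖
      ≤ ∑ j ∈ Finset.Ico M M', ‖∑ p ∈ s'.filter (fun p => n j ≤ p.1.length ∧ p.1.length < n (j+1)), lam p • e p‖ :=
        norm_sum_le _ _
    _ ≤ ∑ j ∈ Finset.Ico M M', Real.sqrt (((2:ℝ) ^ τ.length)⁻¹) * useq n j :=
        Finset.sum_le_sum hjb
    _ = Real.sqrt (((2:ℝ) ^ τ.length)⁻¹) * ∑ j ∈ Finset.Ico M M', useq n j := by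
        rw [Finset.mul_sum]
    _ ≤ Real.sqrt (((2:ℝ) ^ τ.length)⁻¹) * ((3/2) * useq n M) :=
        mul_le_mul_of_nonneg_left (useq_tail_sum hu M M') (Real.sqrt_nonneg _)

lemma abs_block_bound (hmono : StrictMono n)
    (hblock : ∀ (j : ℕ) (s : Finset Bidx),
      (∀ p ∈ s, n j ≤ p.1.length ∧ p.1.length < n (j+1)) →
      ∀ lam : Bidx → ℝ,
        ‖∑ p ∈ s, lam p • e p‖ ≤ Real.sqrt (∑ p ∈ s, lam p ^ 2) ∧
        (1/2) * Real.sqrt (∑ p ∈ s, lam p ^ 2) ≤ ‖∑ p ∈ s, lam p • e p‖)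
    (hu : ∀ k, useq n (k+1) < useq n k / 3)
    {nn : ℕ → ℕ} {hnn : ∀ i, nn i ≤ i} {τ : List Bool}
    (lam : Bidx → ℝ)
    (hsupp : ∀ p, lam p ≠ 0 → p ∈ lvlSet nn hnn τ p.1.length)
    (hbd : ∀ p, |lam p| ≤ cf p.1.length)
    (M : ℕ) (hτM : τ.length ≤ n M)
    (hlev : ∀ p, lam p ≠ 0 → n M ≤ p.1.length)
    (φ : X →L[ℝ] ℝ) (s : Finset Bidx) :
    ∑ p ∈ s, |lam p| * |φ (e p)| ≤
      Real.sqrt (((2:ℝ) ^ τ.length)⁻¹) * ((3/2) * useq n M) * ‖φ‖ := by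
  classical
  set s' := s.filter (fun p => lam p ≠ 0) with hs'
  have hsum : ∑ p ∈ s', |lam p| * |φ (e p)| = ∑ p ∈ s, |lam p| * |φ (e p)| := by
    refine Finset.sum_filter_of_ne (fun p _ h => ?_)
    intro h0
    exact h (by rw [h0, abs_zero, zero_mul])
  obtain ⟨M', hpart⟩ := partition_blocks hmono s' M
    (fun p hp => hlev p (Finset.mem_filter.mp hp).2)
  rw [← hsum, hpart, Finset.sum_biUnion (filters_pdisjoint hmono s' M M')]
  have hjb : ∀ j ∈ Finset.Ico M M',
      ∑ p ∈ s'.filter (fun p => n j ≤ p.1.length ∧ p.1.length < n (j+1)), |lam p| * |φ (e p)| ≤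
        Real.sqrt (((2:ℝ) ^ τ.length)⁻¹) * useq n j * ‖φ‖ := by
    intro j hj
    have hcond : ∀ p ∈ s'.filter (fun p => n j ≤ p.1.length ∧ p.1.length < n (j+1)),
        n j ≤ p.1.length ∧ p.1.length < n (j+1) := fun p hp => (Finset.mem_filter.mp hp).2
    have hτj : τ.length ≤ n j := le_trans hτM (hmono.monotone (Finset.mem_Ico.mp hj).1)
    have h2 := lam_sq_le_blk (nn := nn) (hnn := hnn) hmono lam hsupp hbd
      (s'.filter (fun p => n j ≤ p.1.length ∧ p.1.length < n (j+1))) j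
      (fun p hp => (Finset.mem_filter.mp (Finset.mem_filter.mp hp).1).2)
      hcond hτj
    have hφ2 := l2_dual (n := n) e hblock j _ hcond φ
    have c1 : Real.sqrt (∑ p ∈ s'.filter (fun p => n j ≤ p.1.length ∧ p.1.length < n (j+1)), lam p ^ 2)
        ≤ Real.sqrt (((2:ℝ) ^ τ.length)⁻¹) * useq n j := by
      calc _ ≤ Real.sqrt (((2:ℝ) ^ τ.length)⁻¹ *
            ∑ i ∈ Finset.Ico (n j) (n (j+1)), (((i:ℝ) + 1)⁻¹) ^ 2) := Real.sqrt_le_sqrt h2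
        _ = _ := by rw [Real.sqrt_mul (by positivity)]; rfl
    have c2 : Real.sqrt (∑ p ∈ s'.filter (fun p => n j ≤ p.1.length ∧ p.1.length < n (j+1)), (φ (e p)) ^ 2) ≤ ‖φ‖ := by
      calc _ ≤ Real.sqrt (‖φ‖ ^ 2) := Real.sqrt_le_sqrt hφ2
        _ = ‖φ‖ := Real.sqrt_sq (norm_nonneg _)
    calc ∑ p ∈ s'.filter (fun p => n j ≤ p.1.length ∧ p.1.length < n (j+1)), |lam p| * |φ (e p)|
        ≤ Real.sqrt (∑ p ∈ s'.filter (fun p => n j ≤ p.1.length ∧ p.1.length < n (j+1)), lam p ^ 2) *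
          Real.sqrt (∑ p ∈ s'.filter (fun p => n j ≤ p.1.length ∧ p.1.length < n (j+1)), (φ (e p)) ^ 2) :=
          cs_bound _ _ _
      _ ≤ Real.sqrt (((2:ℝ) ^ τ.length)⁻¹) * useq n j * ‖φ‖ := by
          exact mul_le_mul c1 c2 (Real.sqrt_nonneg _)
            (mul_nonneg (Real.sqrt_nonneg _) (useq_nonneg n j))
  calc ∑ j ∈ Finset.Ico M M', ∑ p ∈ s'.filter (fun p => n j ≤ p.1.length ∧ p.1.length < n (j+1)), |lam p| * |φ (e p)|
      ≤ ∑ j ∈ Finset.Ico M M', Real.sqrt (((2:ℝ) ^ τ.length)⁻¹) * useq n j * ‖φ‖ :=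
        Finset.sum_le_sum hjb
    _ = Real.sqrt (((2:ℝ) ^ τ.length)⁻¹) * (∑ j ∈ Finset.Ico M M', useq n j) * ‖φ‖ := by
        rw [← Finset.sum_mul, ← Finset.mul_sum]
    _ ≤ Real.sqrt (((2:ℝ) ^ τ.length)⁻¹) * ((3/2) * useq n M) * ‖φ‖ := by
        refine mul_le_mul_of_nonneg_right (mul_le_mul_of_nonneg_left (useq_tail_sum hu M M') (Real.sqrt_nonneg _)) (norm_nonneg _)

end Analytic2


section MeasureStuff

variable {X : Type} [NormedAddCommGroup X] [NormedSpace ℝ X]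

lemma nn_bound {S : Set ℝ} (hfin : volume S ≠ ⊤) (m : ℝ≥0∞) (hm : m ≤ volume S) (r : ℝ) :
    (‖((volume S).toReal)⁻¹ * r‖₊ : ℝ≥0∞) * m ≤ ENNReal.ofReal |r| := by
  rw [← enorm_eq_nnnorm, Real.enorm_eq_ofReal_abs]
  have key : |((volume S).toReal)⁻¹ * r| * (volume S).toReal ≤ |r| := by
    rw [abs_mul, abs_inv, abs_of_nonneg ENNReal.toReal_nonneg]
    rcases eq_or_ne ((volume S).toReal) 0 with h | h
    · rw [h, mul_zero]; exact abs_nonneg r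
    · have : ((volume S).toReal)⁻¹ * |r| * (volume S).toReal = |r| := by field_simp
      rw [this]
  calc ENNReal.ofReal |((volume S).toReal)⁻¹ * r| * m
      ≤ ENNReal.ofReal |((volume S).toReal)⁻¹ * r| * volume S := mul_le_mul_right hm _
    _ = ENNReal.ofReal |((volume S).toReal)⁻¹ * r| * ENNReal.ofReal ((volume S).toReal) := by
        rw [ENNReal.ofReal_toReal hfin]
    _ = ENNReal.ofReal (|((volume S).toReal)⁻¹ * r| * (volume S).toReal) :=
        (ENNReal.ofReal_mul (abs_nonneg _)).symm
    _ ≤ ENNReal.ofReal |r| := ENNReal.ofReal_le_ofReal key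

lemma sm_tsum_indicator {Y : Type} [NormedAddCommGroup Y] (A : Bidx → Set ℝ)
    (hAm : ∀ p, MeasurableSet (A p))
    (hdisj : ∀ p q : Bidx, p ≠ q → Disjoint (A p) (A q)) (d : Bidx → Y) :
    StronglyMeasurable (fun t => ∑' p : Bidx, Set.indicator (A p) (fun _ => d p) t) := by
  classical
  apply stronglyMeasurable_of_tendsto (u := Filter.atTop)
    (f := fun m t => ∑ j ∈ Finset.range m,
      Set.indicator (A (bidxEnum j)) (fun _ => d (bidxEnum j)) t)
  · intro m
    exact Finset.stronglyMeasurable_fun_sum _ fun j _ =>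
      StronglyMeasurable.indicator (f := fun _ : ℝ => d (bidxEnum j)) stronglyMeasurable_const (hAm _)
  · rw [tendsto_pi_nhds]
    intro t
    by_cases h : ∃ p, t ∈ A p
    · obtain ⟨p₀, hp₀⟩ := h
      have hval : (∑' p : Bidx, Set.indicator (A p) (fun _ => d p) t) = d p₀ := by
        rw [tsum_eq_single p₀ (fun q hq =>
          Set.indicator_of_notMem (Set.disjoint_right.mp (hdisj q p₀ hq) hp₀) _)]
        exact Set.indicator_of_mem hp₀ _
      rw [hval]
      refine tendsto_const_nhds.congr' ?_
      rw [Filter.EventuallyEq, Filter.eventually_atTop]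
      refine ⟨bidxEnum.symm p₀ + 1, fun m hm => ?_⟩
      have hterm : ∀ j, Set.indicator (A (bidxEnum j)) (fun _ => d (bidxEnum j)) t =
          if j = bidxEnum.symm p₀ then d p₀ else 0 := by
        intro j
        by_cases hj : j = bidxEnum.symm p₀
        · subst hj
          rw [if_pos rfl, Equiv.apply_symm_apply]
          exact Set.indicator_of_mem hp₀ _
        · rw [if_neg hj]
          refine Set.indicator_of_notMem ?_ _
          refine Set.disjoint_right.mp (hdisj (bidxEnum j) p₀ ?_) hp₀
          intro hc
          exact hj (by rw [← hc, Equiv.symm_apply_apply])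
      have h2 : ∑ j ∈ Finset.range m, Set.indicator (A (bidxEnum j)) (fun _ => d (bidxEnum j)) t
          = ∑ j ∈ Finset.range m, if j = bidxEnum.symm p₀ then d p₀ else 0 :=
        Finset.sum_congr rfl fun j _ => hterm j
      rw [h2, Finset.sum_ite_eq' (Finset.range m) (bidxEnum.symm p₀) (fun _ => d p₀),
        if_pos (Finset.mem_range.mpr hm)]
    · push_neg at h
      have hval : (∑' p : Bidx, Set.indicator (A p) (fun _ => d p) t) = 0 := by
        rw [tsum_congr (fun p => Set.indicator_of_notMem (h p) (fun _ => d p))]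
        exact tsum_zero
      rw [hval]
      refine tendsto_const_nhds.congr fun m => ?_
      symm
      refine Finset.sum_eq_zero fun j _ => Set.indicator_of_notMem (h _) _

lemma basicFun_phi_apply (c : Bidx → ℝ) (A : Bidx → Set ℝ)
    (hdisj : ∀ p q : Bidx, p ≠ q → Disjoint (A p) (A q)) (e : Bidx → X) (φ : X →L[ℝ] ℝ)
    (t : ℝ) :
    φ (basicFun c A e t) =
      ∑' p : Bidx, Set.indicator (A p)
        (fun _ => ((volume (A p)).toReal)⁻¹ * (c p * φ (e p))) t := by
  unfold basicFun
  by_cases h : ∃ p, t ∈ A p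
  · obtain ⟨p₀, hp₀⟩ := h
    rw [tsum_eq_single p₀ (fun q hq =>
      Set.indicator_of_notMem (Set.disjoint_right.mp (hdisj q p₀ hq) hp₀) _),
      tsum_eq_single p₀ (fun q hq =>
      Set.indicator_of_notMem (Set.disjoint_right.mp (hdisj q p₀ hq) hp₀) _)]
    rw [Set.indicator_of_mem hp₀, Set.indicator_of_mem hp₀, _root_.map_smul, _root_.map_smul,
      smul_eq_mul, smul_eq_mul]
  · push_neg at h
    rw [tsum_congr (fun p => Set.indicator_of_notMem (h p) _),
      tsum_congr (fun p => Set.indicator_of_notMem (h p) _), tsum_zero, tsum_zero, map_zero]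

lemma nnnorm_tsum_indicator_le (A : Bidx → Set ℝ)
    (hdisj : ∀ p q : Bidx, p ≠ q → Disjoint (A p) (A q)) (d : Bidx → ℝ) (t : ℝ) :
    (‖∑' p : Bidx, Set.indicator (A p) (fun _ => d p) t‖₊ : ℝ≥0∞) ≤
      ∑' p : Bidx, Set.indicator (A p) (fun _ => (‖d p‖₊ : ℝ≥0∞)) t := by
  by_cases h : ∃ p, t ∈ A p
  · obtain ⟨p₀, hp₀⟩ := h
    rw [tsum_eq_single p₀ (fun q hq =>
      Set.indicator_of_notMem (Set.disjoint_right.mp (hdisj q p₀ hq) hp₀) _)]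
    rw [Set.indicator_of_mem hp₀]
    calc (‖d p₀‖₊ : ℝ≥0∞) = Set.indicator (A p₀) (fun _ => (‖d p₀‖₊ : ℝ≥0∞)) t := by
          rw [Set.indicator_of_mem hp₀]
      _ ≤ _ := ENNReal.le_tsum p₀
  · push_neg at h
    rw [tsum_congr (fun p => Set.indicator_of_notMem (h p) _), tsum_zero]
    simp

end MeasureStuff


lemma sqrt_inv_two_pow (L : ℕ) : Real.sqrt (((2:ℝ) ^ L)⁻¹) = (2:ℝ) ^ (-(L:ℝ)/2) := by
  have h1 : ((2:ℝ) ^ L)⁻¹ = (2:ℝ) ^ (-(L:ℝ)) := by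
    rw [← Real.rpow_natCast 2 L, ← Real.rpow_neg (by norm_num)]
  rw [h1, Real.sqrt_eq_rpow, ← Real.rpow_mul (by norm_num)]
  congr 1
  ring

lemma cres_eq_cf {nn : ℕ → ℕ} {hnn : ∀ i, nn i ≤ i} {τ : List Bool} {k : ℕ} (p : Bidx)
    (hp : p ∈ lvlSet nn hnn τ k) :
    (if τ <+: p.1 then specialCoef nn p else 0) = cf p.1.length := by
  obtain ⟨hpre, hlen, hval⟩ := mem_lvlSet.mp hp
  rw [if_pos hpre]
  unfold specialCoef cf
  have hnk : nn p.1.length = nn k := by rw [hlen]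
  rw [if_pos (hval.trans hnk.symm)]

section Sums

variable {X : Type} [NormedAddCommGroup X] [NormedSpace ℝ X]
variable {n : ℕ → ℕ} {e : Bidx → X}

lemma summable_lam_smul [CompleteSpace X] (hmono : StrictMono n) (hn0 : n 0 = 0)
    (hblock : ∀ (j : ℕ) (s : Finset Bidx),
      (∀ p ∈ s, n j ≤ p.1.length ∧ p.1.length < n (j+1)) →
      ∀ lam : Bidx → ℝ,
        ‖∑ p ∈ s, lam p • e p‖ ≤ Real.sqrt (∑ p ∈ s, lam p ^ 2) ∧
        (1/2) * Real.sqrt (∑ p ∈ s, lam p ^ 2) ≤ ‖∑ p ∈ s, lam p • e p‖)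
    (hu : ∀ k, useq n (k+1) < useq n k / 3)
    {nn : ℕ → ℕ} {hnn : ∀ i, nn i ≤ i} {τ : List Bool}
    (lam : Bidx → ℝ)
    (hsupp : ∀ p, lam p ≠ 0 → p ∈ lvlSet nn hnn τ p.1.length)
    (hbd : ∀ p, |lam p| ≤ cf p.1.length) :
    Summable (fun p : Bidx => lam p • e p) := by
  classical
  rw [summable_iff_vanishing_norm]
  intro ε hε
  set D : ℝ := Real.sqrt (((2:ℝ) ^ τ.length)⁻¹) * (3/2) with hD
  have hD0 : 0 ≤ D := by positivity
  set C : ℝ := D * useq n 0 with hC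
  have hC0 : 0 ≤ C := mul_nonneg hD0 (useq_nonneg n 0)
  obtain ⟨M₁, hM₁⟩ := exists_pow_lt_of_lt_one
    (show (0:ℝ) < ε / (C + 1) by positivity) (show (1/3:ℝ) < 1 by norm_num)
  set M : ℕ := max M₁ τ.length with hM
  have hτM : τ.length ≤ n M := le_trans (le_max_right _ _) hmono.le_apply
  have huM : useq n M ≤ (1/3:ℝ) ^ M₁ * useq n 0 := by
    have h1 : useq n M ≤ (1/3:ℝ) ^ M * useq n 0 := by
      have := useq_pow_le hu 0 M
      simpa using this
    have h2 : ((1/3:ℝ)) ^ M ≤ (1/3:ℝ) ^ M₁ :=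
      pow_le_pow_of_le_one (by norm_num) (by norm_num) (le_max_left _ _)
    have := useq_nonneg n 0
    nlinarith
  have hbound : D * useq n M < ε := by
    have h3 : D * useq n M ≤ C * (1/3:ℝ) ^ M₁ := by
      calc D * useq n M ≤ D * ((1/3:ℝ) ^ M₁ * useq n 0) :=
            mul_le_mul_of_nonneg_left huM hD0
        _ = C * (1/3:ℝ) ^ M₁ := by rw [hC]; ring
    have h4 : C * (1/3:ℝ) ^ M₁ ≤ (C + 1) * (1/3:ℝ) ^ M₁ := by
      have : (0:ℝ) ≤ (1/3:ℝ) ^ M₁ := by positivity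
      nlinarith
    have h5 : (C + 1) * (1/3:ℝ) ^ M₁ < (C + 1) * (ε / (C + 1)) := by
      exact mul_lt_mul_of_pos_left hM₁ (by positivity)
    have h6 : (C + 1) * (ε / (C + 1)) = ε := by field_simp
    linarith
  refine ⟨(Finset.range M).biUnion (blkSet n nn hnn τ), fun t ht => ?_⟩
  have hlev : ∀ p ∈ t, lam p ≠ 0 → n M ≤ p.1.length := by
    intro p hp hne
    by_contra hlt
    push_neg at hlt
    obtain ⟨j, -, hjM, hj1, hj2⟩ := exists_block hmono (by rw [hn0]; exact Nat.zero_le _) hlt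
    have hpB : p ∈ (Finset.range M).biUnion (blkSet n nn hnn τ) :=
      Finset.mem_biUnion.mpr ⟨j, Finset.mem_range.mpr hjM,
        mem_blkSet.mpr ⟨hsupp p hne, hj1, hj2⟩⟩
    exact (Finset.disjoint_left.mp ht hp) hpB
  calc ‖∑ p ∈ t, lam p • e p‖
      ≤ Real.sqrt (((2:ℝ) ^ τ.length)⁻¹) * ((3/2) * useq n M) :=
        block_bound hmono hblock hu lam hsupp hbd M hτM t hlev
    _ = D * useq n M := by rw [hD]; ring
    _ < ε := hbound

lemma tendsto_sum_biUnion {Y : Type} [AddCommMonoid Y] [TopologicalSpace Y]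
    (x : Bidx → Y) (hx : Summable x) (Bst : ℕ → Finset Bidx)
    (hsupp : ∀ p, x p ≠ 0 → ∃ j, p ∈ Bst j) :
    Filter.Tendsto (fun m => ∑ p ∈ (Finset.range m).biUnion Bst, x p)
      Filter.atTop (nhds (∑' p, x p)) := by
  classical
  set s : ℕ → Finset Bidx := fun m => ((Finset.range m).biUnion Bst) ∪
    ((Finset.range m).image bidxEnum).filter (fun p => x p = 0) with hs
  have hmon : Monotone s := by
    intro a b hab
    refine Finset.union_subset_union ?_ ?_
    · exact Finset.biUnion_subset_biUnion_of_subset_left _ (Finset.range_subset_range.mpr hab)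
    · exact Finset.filter_subset_filter _ (Finset.image_subset_image (Finset.range_subset_range.mpr hab))
  have hcov : ∀ p : Bidx, ∃ m, p ∈ s m := by
    intro p
    by_cases hxp : x p = 0
    · refine ⟨bidxEnum.symm p + 1, Finset.mem_union_right _ (Finset.mem_filter.mpr
        ⟨Finset.mem_image.mpr ⟨bidxEnum.symm p, Finset.mem_range.mpr (Nat.lt_succ_self _),
          Equiv.apply_symm_apply _ _⟩, hxp⟩)⟩
    · obtain ⟨j, hj⟩ := hsupp p hxp
      exact ⟨j+1, Finset.mem_union_left _ (Finset.mem_biUnion.mpr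
        ⟨j, Finset.mem_range.mpr (Nat.lt_succ_self _), hj⟩)⟩
  have hten : Filter.Tendsto s Filter.atTop Filter.atTop :=
    hmon.tendsto_atTop_finset hcov
  have h1 : Filter.Tendsto (fun m => ∑ p ∈ s m, x p) Filter.atTop (nhds (∑' p, x p)) :=
    hx.hasSum.comp hten
  refine h1.congr fun m => ?_
  refine (Finset.sum_subset Finset.subset_union_left fun p hps hpn => ?_).symm
  rcases Finset.mem_union.mp hps with h | h
  · exact absurd h hpn
  · exact (Finset.mem_filter.mp h).2

end Sums


section IntegralStuff

variable {X : Type} [NormedAddCommGroup X] [NormedSpace ℝ X]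

lemma tsum_nn_ne_top {A : Bidx → Set ℝ} (hAfin : ∀ p, volume (A p) ≠ ⊤)
    (r : Bidx → ℝ) (m : Bidx → ℝ≥0∞) (hm : ∀ p, m p ≤ volume (A p))
    (hsum : Summable fun p => |r p|) :
    ∑' p : Bidx, (‖((volume (A p)).toReal)⁻¹ * r p‖₊ : ℝ≥0∞) * m p ≠ ⊤ := by
  have hle : ∑' p : Bidx, (‖((volume (A p)).toReal)⁻¹ * r p‖₊ : ℝ≥0∞) * m p ≤
      ENNReal.ofReal (∑' p, |r p|) := by
    rw [ENNReal.ofReal_tsum_of_nonneg (fun p => abs_nonneg _) hsum]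
    exact ENNReal.tsum_le_tsum fun p => nn_bound (hAfin p) (m p) (hm p) (r p)
  exact ne_top_of_le_ne_top ENNReal.ofReal_ne_top hle

lemma restrict_restrict_le {A E : Set ℝ} (hA : MeasurableSet A) (hE : MeasurableSet E) :
    ((volume.restrict (Set.Icc (0:ℝ) 1)).restrict E) A ≤ volume A := by
  rw [Measure.restrict_apply hA, Measure.restrict_apply (hA.inter hE)]
  exact measure_mono (Set.inter_subset_left.trans Set.inter_subset_left)

lemma restrict_le {A : Set ℝ} (hA : MeasurableSet A) :
    (volume.restrict (Set.Icc (0:ℝ) 1)) A ≤ volume A := by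
  rw [Measure.restrict_apply hA]
  exact measure_mono Set.inter_subset_left

lemma integral_phi_basicFun (c : Bidx → ℝ) (A : Bidx → Set ℝ)
    (hAm : ∀ p, MeasurableSet (A p)) (hAfin : ∀ p, volume (A p) ≠ ⊤)
    (hdisj : ∀ p q : Bidx, p ≠ q → Disjoint (A p) (A q)) (e : Bidx → X) (φ : X →L[ℝ] ℝ)
    (E : Set ℝ) (hE : MeasurableSet E)
    (hsum : Summable (fun p => |c p * φ (e p)|)) :
    ∫ t in E, φ (basicFun c A e t) ∂(volume.restrict (Set.Icc 0 1)) =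
      ∑' p : Bidx, (((volume.restrict (Set.Icc (0:ℝ) 1)).restrict E) (A p)).toReal *
        (((volume (A p)).toReal)⁻¹ * (c p * φ (e p))) := by
  simp only [basicFun_phi_apply c A hdisj e φ]
  rw [MeasureTheory.integral_tsum (fun p =>
      (stronglyMeasurable_const.indicator (hAm p)).aestronglyMeasurable) ?_]
  · exact tsum_congr fun p => by
      rw [MeasureTheory.integral_indicator_const _ (hAm p), smul_eq_mul, measureReal_def]
  · have hptw : ∀ (p : Bidx) (a : ℝ),
        (‖Set.indicator (A p) (fun _ => ((volume (A p)).toReal)⁻¹ * (c p * φ (e p))) a‖₊ : ℝ≥0∞) =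
          Set.indicator (A p)
            (fun _ => ((‖((volume (A p)).toReal)⁻¹ * (c p * φ (e p))‖₊ : ℝ≥0∞))) a := by
      intro p a
      by_cases h : a ∈ A p <;> simp [h]
    have heq : ∀ p : Bidx,
        ∫⁻ a, (‖Set.indicator (A p) (fun _ => ((volume (A p)).toReal)⁻¹ * (c p * φ (e p))) a‖₊ : ℝ≥0∞)
          ∂((volume.restrict (Set.Icc (0:ℝ) 1)).restrict E) =
        (‖((volume (A p)).toReal)⁻¹ * (c p * φ (e p))‖₊ : ℝ≥0∞) *
          ((volume.restrict (Set.Icc (0:ℝ) 1)).restrict E) (A p) := by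
      intro p
      rw [lintegral_congr (hptw p), MeasureTheory.lintegral_indicator_const (hAm p)]
    calc ∑' p : Bidx, ∫⁻ a, (‖Set.indicator (A p)
            (fun _ => ((volume (A p)).toReal)⁻¹ * (c p * φ (e p))) a‖₊ : ℝ≥0∞)
          ∂((volume.restrict (Set.Icc (0:ℝ) 1)).restrict E)
        = ∑' p : Bidx, (‖((volume (A p)).toReal)⁻¹ * (c p * φ (e p))‖₊ : ℝ≥0∞) *
            ((volume.restrict (Set.Icc (0:ℝ) 1)).restrict E) (A p) := tsum_congr heq
      _ ≠ ⊤ := tsum_nn_ne_top hAfin (fun p => c p * φ (e p)) _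
            (fun p => restrict_restrict_le (hAm p) hE) hsum

lemma integrable_phi_basicFun (c : Bidx → ℝ) (A : Bidx → Set ℝ)
    (hAm : ∀ p, MeasurableSet (A p)) (hAfin : ∀ p, volume (A p) ≠ ⊤)
    (hdisj : ∀ p q : Bidx, p ≠ q → Disjoint (A p) (A q)) (e : Bidx → X) (φ : X →L[ℝ] ℝ)
    (hsum : Summable (fun p => |c p * φ (e p)|)) :
    MeasureTheory.Integrable (fun t => φ (basicFun c A e t))
      (volume.restrict (Set.Icc 0 1)) := by
  set d : Bidx → ℝ := fun p => ((volume (A p)).toReal)⁻¹ * (c p * φ (e p)) with hd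
  have hrw : (fun t => φ (basicFun c A e t)) =
      fun t => ∑' p : Bidx, Set.indicator (A p) (fun _ => d p) t :=
    funext (basicFun_phi_apply c A hdisj e φ)
  rw [hrw]
  constructor
  · exact (sm_tsum_indicator A hAm hdisj d).aestronglyMeasurable
  · rw [MeasureTheory.hasFiniteIntegral_def]
    calc ∫⁻ a, (‖∑' p : Bidx, Set.indicator (A p) (fun _ => d p) a‖₊ : ℝ≥0∞)
          ∂(volume.restrict (Set.Icc 0 1))
        ≤ ∫⁻ a, ∑' p : Bidx, Set.indicator (A p) (fun _ => ((‖d p‖₊ : ℝ≥0∞))) a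
          ∂(volume.restrict (Set.Icc 0 1)) :=
          MeasureTheory.lintegral_mono (fun a => nnnorm_tsum_indicator_le A hdisj d a)
      _ = ∑' p : Bidx, ∫⁻ a, Set.indicator (A p) (fun _ => ((‖d p‖₊ : ℝ≥0∞))) a
          ∂(volume.restrict (Set.Icc 0 1)) :=
          MeasureTheory.lintegral_tsum (fun p =>
            (measurable_const.indicator (hAm p)).aemeasurable)
      _ = ∑' p : Bidx, (‖d p‖₊ : ℝ≥0∞) * (volume.restrict (Set.Icc (0:ℝ) 1)) (A p) :=
          tsum_congr fun p => MeasureTheory.lintegral_indicator_const (hAm p) _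
      _ < ⊤ := by
          refine lt_of_le_of_ne le_top ?_
          exact tsum_nn_ne_top hAfin (fun p => c p * φ (e p)) _
            (fun p => restrict_le (hAm p)) hsum

end IntegralStuff


/-- Lemma 4.4: for `𝐧 ∈ D`, the `X`-valued special basic function `f(𝐧)` is Pettis
integrable, and for `τ ∈ {0,1}^{n_k}`:
`(1/2K) 2^{-n_k/2} u_k ≤ ‖∫_{I_τ} f(𝐧)_{|τ}‖ ≤ (3/2) 2^{-n_k/2} u_k`,
where `u_k = √(∑_{i=n_k}^{n_{k+1}-1} 1/(i+1)²)`. -/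
theorem stmt16 {X : Type} [NormedAddCommGroup X] [NormedSpace ℝ X] [CompleteSpace X]
    (A : Bidx → Set ℝ) (hAc : ∀ p, IsClosed (A p))
    (hAs : ∀ p : Bidx, A p ⊆ dyadicInterval p.1)
    (hApos : ∀ p, 0 < volume (A p))
    (hdisj : ∀ p q : Bidx, p ≠ q → Disjoint (A p) (A q))
    (n : ℕ → ℕ) (hmono : StrictMono n) (hn0 : n 0 = 0)
    (K : ℝ) (hK : 1 < K) (e : Bidx → X)
    (hblock : ∀ (j : ℕ) (s : Finset Bidx),
      (∀ p ∈ s, n j ≤ p.1.length ∧ p.1.length < n (j+1)) →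
      ∀ lam : Bidx → ℝ,
        ‖∑ p ∈ s, lam p • e p‖ ≤ Real.sqrt (∑ p ∈ s, lam p ^ 2) ∧
        (1/2) * Real.sqrt (∑ p ∈ s, lam p ^ 2) ≤ ‖∑ p ∈ s, lam p • e p‖)
    (hbb : ∀ v : ℕ → X,
      (∀ j, v j ∈ Submodule.span ℝ
        (e '' {p : Bidx | n j ≤ p.1.length ∧ p.1.length < n (j+1)})) →
      ∀ S : X,
        Filter.Tendsto (fun m => ∑ j ∈ Finset.range m, v j) Filter.atTop (nhds S) →
        (∀ k l : ℕ, k ≤ l → K⁻¹ * ‖∑ j ∈ Finset.Icc k l, v j‖ ≤ ‖S‖) ∧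
        (∀ k : ℕ, K⁻¹ * ‖S - ∑ j ∈ Finset.range k, v j‖ ≤ ‖S‖))
    (hu : ∀ k : ℕ,
      Real.sqrt (∑ i ∈ Finset.Ico (n (k+1)) (n (k+2)), (((i:ℝ) + 1)⁻¹) ^ 2) <
      Real.sqrt (∑ i ∈ Finset.Ico (n k) (n (k+1)), (((i:ℝ) + 1)⁻¹) ^ 2) / 3)
    (nn : ℕ → ℕ) (hnn : ∀ i, nn i ≤ i) :
    PettisIntegrable (basicFun (specialCoef nn) A e) (volume.restrict (Set.Icc 0 1)) ∧
    ∀ (k : ℕ) (τ : List Bool), τ.length = n k → ∀ v : X,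
      IsPettisIntegralOn (basicFunRes τ (specialCoef nn) A e)
        (volume.restrict (Set.Icc 0 1)) (dyadicInterval τ) v →
      (2*K)⁻¹ * (2:ℝ) ^ (-((n k : ℝ))/2) *
          Real.sqrt (∑ i ∈ Finset.Ico (n k) (n (k+1)), (((i:ℝ) + 1)⁻¹) ^ 2) ≤ ‖v‖ ∧
      ‖v‖ ≤ (3/2) * (2:ℝ) ^ (-((n k : ℝ))/2) *
          Real.sqrt (∑ i ∈ Finset.Ico (n k) (n (k+1)), (((i:ℝ) + 1)⁻¹) ^ 2) := by
  classical
  have hu' : ∀ k, useq n (k+1) < useq n k / 3 := fun k => by unfold useq; exact hu k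
  have hAm : ∀ p, MeasurableSet (A p) := fun p => (hAc p).measurableSet
  have hAIcc : ∀ p : Bidx, A p ⊆ Set.Icc (0:ℝ) 1 :=
    fun p => (hAs p).trans (dyadicInterval_subset_Icc p.1)
  have hAfin : ∀ p, volume (A p) ≠ ⊤ := by
    intro p
    refine ne_top_of_le_ne_top ?_ (measure_mono (hAIcc p))
    rw [Real.volume_Icc]
    exact ENNReal.ofReal_ne_top
  have hApos' : ∀ p, 0 < (volume (A p)).toReal :=
    fun p => ENNReal.toReal_pos (hApos p).ne' (hAfin p)
  set c0 : Bidx → ℝ := specialCoef nn with hc0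
  have hc0supp : ∀ p, c0 p ≠ 0 → p ∈ lvlSet nn hnn ([] : List Bool) p.1.length := by
    intro p hp
    have hcond : (p.2:ℕ) = nn p.1.length := by
      by_contra hne
      exact hp (by simp [hc0, specialCoef, hne])
    exact mem_lvlSet.mpr ⟨List.nil_prefix, rfl, hcond⟩
  have hc0bd : ∀ p, |c0 p| ≤ cf p.1.length := by
    intro p
    rw [hc0]
    unfold specialCoef cf
    split
    · rw [abs_of_nonneg]
      have h2 : (0:ℝ) < (2:ℝ) ^ ((p.1.length : ℝ) / 2) := Real.rpow_pos_of_pos (by norm_num) _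
      positivity
    · rw [abs_zero]
      have h2 : (0:ℝ) < (2:ℝ) ^ ((p.1.length : ℝ) / 2) := Real.rpow_pos_of_pos (by norm_num) _
      positivity
  have habssum : ∀ (τ : List Bool) (lam : Bidx → ℝ),
      (∀ p, lam p ≠ 0 → p ∈ lvlSet nn hnn τ p.1.length) →
      (∀ p, |lam p| ≤ cf p.1.length) →
      ∀ (M : ℕ), τ.length ≤ n M → (∀ p, lam p ≠ 0 → n M ≤ p.1.length) →
      ∀ (φ : X →L[ℝ] ℝ), Summable (fun p => |lam p * φ (e p)|) := by
    intro τ lam hsupp hbd M hτM hlev φ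
    refine summable_of_sum_le
      (c := Real.sqrt (((2:ℝ) ^ τ.length)⁻¹) * ((3/2) * useq n M) * ‖φ‖)
      (fun p => abs_nonneg _) (fun s => ?_)
    calc ∑ p ∈ s, |lam p * φ (e p)| = ∑ p ∈ s, |lam p| * |φ (e p)| :=
          Finset.sum_congr rfl fun p _ => abs_mul _ _
      _ ≤ Real.sqrt (((2:ℝ) ^ τ.length)⁻¹) * ((3/2) * useq n M) * ‖φ‖ :=
          abs_block_bound hmono hblock hu' lam hsupp hbd M hτM hlev φ s
  constructor
  · constructor
    · intro φ
      exact integrable_phi_basicFun c0 A hAm hAfin hdisj e φ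
        (habssum [] c0 hc0supp hc0bd 0 (Nat.zero_le _) (fun p _ => by rw [hn0]; exact Nat.zero_le _) φ)
    · intro E hE
      set θ : Bidx → ℝ := fun p =>
        (((volume.restrict (Set.Icc (0:ℝ) 1)).restrict E) (A p)).toReal *
          ((volume (A p)).toReal)⁻¹ with hθ
      have hθ0 : ∀ p, 0 ≤ θ p :=
        fun p => mul_nonneg ENNReal.toReal_nonneg (inv_nonneg.mpr ENNReal.toReal_nonneg)
      have hθ1 : ∀ p, θ p ≤ 1 := by
        intro p
        have hle : (((volume.restrict (Set.Icc (0:ℝ) 1)).restrict E) (A p)).toReal ≤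
            (volume (A p)).toReal :=
          ENNReal.toReal_mono (hAfin p) (restrict_restrict_le (hAm p) hE)
        calc θ p ≤ (volume (A p)).toReal * ((volume (A p)).toReal)⁻¹ :=
              mul_le_mul_of_nonneg_right hle (inv_nonneg.mpr ENNReal.toReal_nonneg)
          _ = 1 := mul_inv_cancel₀ (hApos' p).ne'
      have hlam : ∀ p, |θ p * c0 p| ≤ cf p.1.length := by
        intro p
        rw [abs_mul]
        calc |θ p| * |c0 p| ≤ 1 * cf p.1.length := by
              refine mul_le_mul ?_ (hc0bd p) (abs_nonneg _) zero_le_one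
              rw [abs_of_nonneg (hθ0 p)]; exact hθ1 p
          _ = cf p.1.length := one_mul _
      have hlamsupp : ∀ p, θ p * c0 p ≠ 0 → p ∈ lvlSet nn hnn ([] : List Bool) p.1.length :=
        fun p h => hc0supp p (fun h0 => h (by rw [h0, mul_zero]))
      have hsummX : Summable (fun p : Bidx => (θ p * c0 p) • e p) :=
        summable_lam_smul hmono hn0 hblock hu' _ hlamsupp hlam
      refine ⟨∑' p : Bidx, (θ p * c0 p) • e p, fun φ => ?_⟩
      rw [φ.map_tsum hsummX,
        integral_phi_basicFun c0 A hAm hAfin hdisj e φ E hE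
          (habssum [] c0 hc0supp hc0bd 0 (Nat.zero_le _)
            (fun p _ => by rw [hn0]; exact Nat.zero_le _) φ)]
      refine tsum_congr fun p => ?_
      rw [_root_.map_smul, smul_eq_mul]
      simp only [hθ]
      ring
  · intro k τ hτ v hv
    have hgoalu : Real.sqrt (∑ i ∈ Finset.Ico (n k) (n (k+1)), (((i:ℝ) + 1)⁻¹) ^ 2) =
        useq n k := rfl
    set cres : Bidx → ℝ := fun p => if τ <+: p.1 then c0 p else 0 with hcres
    have hressupp : ∀ p, cres p ≠ 0 → p ∈ lvlSet nn hnn τ p.1.length := by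
      intro p hp
      have hpre : τ <+: p.1 := by
        by_contra hq; exact hp (by simp [hcres, hq])
      have hcond : (p.2:ℕ) = nn p.1.length := by
        by_contra hne; exact hp (by simp [hcres, hc0, specialCoef, hne])
      exact mem_lvlSet.mpr ⟨hpre, rfl, hcond⟩
    have hresbd : ∀ p, |cres p| ≤ cf p.1.length := by
      intro p
      by_cases hq : τ <+: p.1
      · simp only [hcres, if_pos hq]; exact hc0bd p
      · simp only [hcres, if_neg hq, abs_zero]; exact cf_nonneg _
    have hreslev : ∀ p, cres p ≠ 0 → n k ≤ p.1.length := by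
      intro p hp
      have hpre : τ <+: p.1 := by
        by_contra hq; exact hp (by simp [hcres, hq])
      calc n k = τ.length := hτ.symm
        _ ≤ p.1.length := hpre.length_le
    have hτM : τ.length ≤ n k := le_of_eq hτ
    have hsummX : Summable (fun p : Bidx => cres p • e p) :=
      summable_lam_smul hmono hn0 hblock hu' cres hressupp hresbd
    set v₀ : X := ∑' p : Bidx, cres p • e p with hv₀
    have hEmeas : MeasurableSet (dyadicInterval τ) := measurableSet_Icc
    have hvv : v = v₀ := by
      have hsub : ∀ φ : X →L[ℝ] ℝ, φ (v - v₀) = 0 := by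
        intro φ
        rw [map_sub]
        have h2 : φ v₀ = ∑' p : Bidx, cres p * φ (e p) := by
          rw [hv₀, φ.map_tsum hsummX]
          exact tsum_congr fun p => by rw [_root_.map_smul, smul_eq_mul]
        have h4 : basicFunRes τ c0 A e = basicFun cres A e := rfl
        have h3 := integral_phi_basicFun cres A hAm hAfin hdisj e φ (dyadicInterval τ) hEmeas
          (habssum τ cres hressupp hresbd k hτM hreslev φ)
        rw [hv φ, h4, h3, h2, sub_eq_zero]
        refine tsum_congr fun p => ?_
        by_cases hp : cres p = 0
        · rw [hp]; simp
        · have hpre : τ <+: p.1 := by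
            by_contra hq; exact hp (by simp [hcres, hq])
          have hAsub : A p ⊆ dyadicInterval τ := (hAs p).trans (dyadicInterval_mono hpre)
          have hval : ((volume.restrict (Set.Icc (0:ℝ) 1)).restrict (dyadicInterval τ)) (A p) =
              volume (A p) := by
            rw [Measure.restrict_apply (hAm p), Measure.restrict_apply ((hAm p).inter hEmeas)]
            rw [Set.inter_eq_self_of_subset_left hAsub,
              Set.inter_eq_self_of_subset_left (hAIcc p)]
          rw [hval, ← mul_assoc, mul_inv_cancel₀ (hApos' p).ne', one_mul]
      exact sub_eq_zero.mp (NormedSpace.eq_zero_of_forall_dual_eq_zero ℝ hsub)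
    set w : ℕ → X := fun j => ∑ p ∈ blkSet n nn hnn τ j, cres p • e p with hw
    have hpd : ∀ m : ℕ, Set.PairwiseDisjoint ↑(Finset.range m) (blkSet n nn hnn τ) :=
      fun m => fun i _ j _ hij => blkSet_disjoint hmono hij
    have hten : Filter.Tendsto (fun m => ∑ j ∈ Finset.range m, w j)
        Filter.atTop (nhds v₀) := by
      have hsupp2 : ∀ p : Bidx, cres p • e p ≠ 0 → ∃ j, p ∈ blkSet n nn hnn τ j := by
        intro p hp
        have hne : cres p ≠ 0 := fun h0 => hp (by rw [h0, zero_smul])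
        have hup : p.1.length < n (p.1.length + 1) :=
          lt_of_lt_of_le (Nat.lt_succ_self _) hmono.le_apply
        obtain ⟨j, -, -, hj1, hj2⟩ := exists_block hmono
          (by rw [hn0]; exact Nat.zero_le _) hup
        exact ⟨j, mem_blkSet.mpr ⟨hressupp p hne, hj1, hj2⟩⟩
      have h1 := tendsto_sum_biUnion (fun p : Bidx => cres p • e p) hsummX
        (blkSet n nn hnn τ) hsupp2
      exact h1.congr fun m => Finset.sum_biUnion (hpd m)
    have hspan : ∀ j, w j ∈ Submodule.span ℝ
        (e '' {p : Bidx | n j ≤ p.1.length ∧ p.1.length < n (j+1)}) := by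
      intro j
      refine Submodule.sum_mem _ fun p hp => ?_
      exact Submodule.smul_mem _ _
        (Submodule.subset_span (Set.mem_image_of_mem e (blkSet_levels p hp)))
    obtain ⟨hbb1, -⟩ := hbb w hspan v₀ hten
    have hwk := hbb1 k k le_rfl
    rw [Finset.Icc_self, Finset.sum_singleton] at hwk
    have hcrescf : ∀ p ∈ blkSet n nn hnn τ k, cres p = cf p.1.length := by
      intro p hp
      obtain ⟨hl, -, -⟩ := mem_blkSet.mp hp
      simp only [hcres, hc0]
      exact cres_eq_cf p hl
    have hsumsq : ∑ p ∈ blkSet n nn hnn τ k, cres p ^ 2 =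
        ((2:ℝ) ^ τ.length)⁻¹ * ∑ i ∈ Finset.Ico (n k) (n (k+1)), (((i:ℝ) + 1)⁻¹) ^ 2 := by
      rw [Finset.sum_congr rfl (fun p hp => by rw [hcrescf p hp])]
      exact blkSet_sum_cf_sq hτM
    have hsqrtA : Real.sqrt (((2:ℝ) ^ τ.length)⁻¹ *
        ∑ i ∈ Finset.Ico (n k) (n (k+1)), (((i:ℝ) + 1)⁻¹) ^ 2) =
        (2:ℝ) ^ (-((n k : ℝ))/2) * useq n k := by
      rw [Real.sqrt_mul (by positivity), sqrt_inv_two_pow, hτ]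
      rfl
    have hlow := (hblock k (blkSet n nn hnn τ k) blkSet_levels cres).2
    rw [hsumsq, hsqrtA] at hlow
    have hK0 : (0:ℝ) < K := lt_trans one_pos hK
    constructor
    · rw [hvv, hgoalu]
      have hconst : (2*K)⁻¹ * ((2:ℝ) ^ (-((n k : ℝ))/2)) * useq n k =
          K⁻¹ * (1/2 * ((2:ℝ) ^ (-((n k : ℝ))/2) * useq n k)) := by
        rw [mul_inv]
        ring
      calc (2*K)⁻¹ * ((2:ℝ) ^ (-((n k : ℝ))/2)) * useq n k
          = K⁻¹ * (1/2 * ((2:ℝ) ^ (-((n k : ℝ))/2) * useq n k)) := hconst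
        _ ≤ K⁻¹ * ‖w k‖ := by
            refine mul_le_mul_of_nonneg_left ?_ (inv_nonneg.mpr hK0.le)
            calc 1/2 * ((2:ℝ) ^ (-((n k : ℝ))/2) * useq n k) ≤
                ‖∑ p ∈ blkSet n nn hnn τ k, cres p • e p‖ := hlow
              _ = ‖w k‖ := rfl
        _ ≤ ‖v₀‖ := hwk
    · rw [hvv, hgoalu]
      have hub : ∀ m : ℕ, ‖∑ j ∈ Finset.range m, w j‖ ≤
          Real.sqrt (((2:ℝ) ^ τ.length)⁻¹) * ((3/2) * useq n k) := by
        intro m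
        have heq : ∑ j ∈ Finset.range m, w j =
            ∑ p ∈ (Finset.range m).biUnion (blkSet n nn hnn τ), cres p • e p :=
          (Finset.sum_biUnion (hpd m)).symm
        rw [heq]
        exact block_bound hmono hblock hu' cres hressupp hresbd k hτM _
          (fun p _ hne => hreslev p hne)
      have hv0 : ‖v₀‖ ≤ Real.sqrt (((2:ℝ) ^ τ.length)⁻¹) * ((3/2) * useq n k) :=
        le_of_tendsto' hten.norm hub
      calc ‖v₀‖ ≤ Real.sqrt (((2:ℝ) ^ τ.length)⁻¹) * ((3/2) * useq n k) := hv0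
        _ = (3/2) * (2:ℝ) ^ (-((n k : ℝ))/2) * useq n k := by
            rw [sqrt_inv_two_pow, hτ]
            ring
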